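/- arXiv:2510.12242 — 4 statements merged into one kernel-verified Lean document; each statement's English description precedes it below -/
import Mathlib

section
/- Let V ≥ 0 be a (possibly unbounded) self-adjoint operator on H, and let {γ_n} be a sequence of positive trace-class operators converging in the weak-* topology of S₁(H) (i.e., Tr(Kγ_n) → Tr(Kγ) for every compact K) to a positive trace-class operator γ. Then Tr(Vγ) ≤ liminf_n Tr(Vγ_n). -/
open scoped ENNReal
open Filter

noncomputable section

variable {H : Type*} [NormedAddCommGroup H] [InnerProductSpace ℂ H] [CompleteSpace H]

/-- The rank-one operator `|φ⟩⟨φ| : ξ ↦ φ ⟨φ, ξ⟩`. -/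
def rankOne (φ : H) : H →L[ℂ] H := (innerSL ℂ φ).smulRight φ

/-- The absolute value `|A| = √(A⋆A)` of a bounded operator. -/
def absOp (A : H →L[ℂ] H) : H →L[ℂ] H := CFC.sqrt (star A * A)

variable {ι : Type*} [Countable ι]

/-- The trace computed along a Hilbert basis. -/
def traceAlong (e : HilbertBasis ι ℂ H) (A : H →L[ℂ] H) : ℝ :=
  ∑' n, (inner ℂ (e n) (A (e n)) : ℂ).re

/-- Summability of the diagonal along a Hilbert basis. -/
def diagSummable (e : HilbertBasis ι ℂ H) (A : H →L[ℂ] H) : Prop :=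
  Summable fun n => (inner ℂ (e n) (A (e n)) : ℂ).re

/-- The trace norm `Tr |A|`. -/
def trNorm (e : HilbertBasis ι ℂ H) (A : H →L[ℂ] H) : ℝ := traceAlong e (absOp A)

/-- `A` is trace class: the diagonal of `|A|` is summable. -/
def IsTraceClass (e : HilbertBasis ι ℂ H) (A : H →L[ℂ] H) : Prop :=
  diagSummable e (absOp A)

/-- A positive (possibly unbounded) self-adjoint operator on `H`, encoded as a densely
defined symmetric positive linear partial map together with its everywhere-defined bounded
resolvent family `res ε = (1 + ε T)⁻¹`, `ε > 0` (whose existence characterizes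
self-adjointness for positive symmetric operators). -/
structure PosSAOp (H : Type*) [NormedAddCommGroup H] [InnerProductSpace ℂ H]
    [CompleteSpace H] where
  toPMap : H →ₗ.[ℂ] H
  dense_domain : Dense (toPMap.domain : Set H)
  symmetric : ∀ x y : toPMap.domain, (inner ℂ (x : H) (toPMap y) : ℂ) = inner ℂ (toPMap x : H) (y : H)
  nonneg : ∀ x : toPMap.domain, 0 ≤ (inner ℂ (x : H) (toPMap x) : ℂ).re
  res : ℝ → H →L[ℂ] H
  res_mem : ∀ ε, 0 < ε → ∀ x : H, res ε x ∈ toPMap.domain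
  res_spec : ∀ (ε : ℝ) (hε : 0 < ε) (x : H),
    res ε x + ε • toPMap ⟨res ε x, res_mem ε hε x⟩ = x

/-- The bounded monotone approximation `T_ε = T(1+εT)⁻¹ = ε⁻¹ (1 - (1+εT)⁻¹)`. -/
def PosSAOp.approx (S : PosSAOp H) (ε : ℝ) : H →L[ℂ] H :=
  ε⁻¹ • (ContinuousLinearMap.id ℂ H - S.res ε)

/-- The extended trace `Tr(Tγ) := sup_{ε>0} Tr(T_ε γ) ∈ [0,∞]`. -/
def extTrace (e : HilbertBasis ι ℂ H) (S : PosSAOp H) (γ : H →L[ℂ] H) : ℝ≥0∞ :=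
  ⨆ (ε : ℝ) (_ : 0 < ε), ENNReal.ofReal (traceAlong e (S.approx ε * γ))

/-- Membership in the form domain `Q(T)`: `φ ∈ Q(T)` iff `Tr(T|φ⟩⟨φ|) < ∞`. -/
def memFormDomain (e : HilbertBasis ι ℂ H) (S : PosSAOp H) (φ : H) : Prop :=
  extTrace e S (rankOne φ) ≠ ⊤

/-- The cone `X⁺` of positive trace-class operators with finite kinetic energy. -/
def Xpos (e : HilbertBasis ι ℂ H) (S : PosSAOp H) : Set (H →L[ℂ] H) :=
  {γ | γ.IsPositive ∧ diagSummable e γ ∧ extTrace e S γ ≠ ⊤}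

/-- The space `X = X⁺ - X⁺`. -/
def Xset (e : HilbertBasis ι ℂ H) (S : PosSAOp H) : Set (H →L[ℂ] H) :=
  {γ | ∃ p ∈ Xpos e S, ∃ m ∈ Xpos e S, γ = p - m}

/-- The `X`-norm `‖γ‖_X = inf {Tr((1+T)γ⁺) + Tr((1+T)γ⁻) : γ = γ⁺ - γ⁻, γ^± ∈ S₁⁺}`,
with value `∞` when no finite decomposition exists. -/
def Xnorm (e : HilbertBasis ι ℂ H) (S : PosSAOp H) (γ : H →L[ℂ] H) : ℝ≥0∞ :=
  ⨅ (pm : (H →L[ℂ] H) × (H →L[ℂ] H)) (_ : pm.1.IsPositive ∧ pm.2.IsPositive ∧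
      diagSummable e pm.1 ∧ diagSummable e pm.2 ∧ γ = pm.1 - pm.2),
    (ENNReal.ofReal (traceAlong e pm.1) + extTrace e S pm.1
      + ENNReal.ofReal (traceAlong e pm.2) + extTrace e S pm.2)


section AuxProof

open ContinuousLinearMap

set_option linter.unusedSectionVars false
set_option maxHeartbeats 1000000
set_option synthInstance.maxHeartbeats 200000

local notation "⟪" x ", " y "⟫" => @inner ℂ _ _ x y

omit [Countable ι] in
lemma aux_hasSum_inner_sq (e : HilbertBasis ι ℂ H) (x : H) :
    HasSum (fun i => ‖⟪e i, x⟫‖ ^ 2) (‖x‖ ^ 2) := by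
  have h := (e.hasSum_inner_mul_inner x x).mapL Complex.reCLM
  have h2 : Complex.reCLM ⟪x, x⟫ = ‖x‖ ^ 2 := by
    rw [@inner_self_eq_norm_sq_to_K ℂ]
    norm_cast
  rw [h2] at h
  have h3 : (fun i => Complex.reCLM (⟪x, e i⟫ * ⟪e i, x⟫)) = fun i => ‖⟪e i, x⟫‖ ^ 2 := by
    funext i
    rw [← inner_conj_symm (e i) x, RCLike.mul_conj, RCLike.norm_conj]
    norm_cast
  rwa [h3] at h

omit [Countable ι] in
lemma aux_summable_double (e : HilbertBasis ι ℂ H) (A : H →L[ℂ] H)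
    (hA : Summable fun j => ‖A (e j)‖ ^ 2) :
    Summable fun p : ι × ι => ‖⟪e p.1, A (e p.2)⟫‖ ^ 2 := by
  rw [← (Equiv.prodComm ι ι).summable_iff]
  have h0 : 0 ≤ fun p : ι × ι => ‖⟪e p.2, A (e p.1)⟫‖ ^ 2 := fun p => sq_nonneg _
  have := (summable_prod_of_nonneg h0).2
    ⟨fun j => (aux_hasSum_inner_sq e (A (e j))).summable,
      hA.congr fun j => ((aux_hasSum_inner_sq e (A (e j))).tsum_eq).symm⟩
  exact this.congr fun p => rfl

omit [Countable ι] in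
lemma aux_adj_hs (e : HilbertBasis ι ℂ H) (A : H →L[ℂ] H)
    (hA : Summable fun j => ‖A (e j)‖ ^ 2) :
    Summable fun k => ‖(adjoint A) (e k)‖ ^ 2 := by
  have hd := aux_summable_double e A hA
  have hd2 : Summable fun p : ι × ι => ‖⟪e p.2, (adjoint A) (e p.1)⟫‖ ^ 2 := by
    refine hd.congr fun p => ?_
    have h1 : ⟪e p.2, (adjoint A) (e p.1)⟫ = starRingEnd ℂ ⟪e p.1, A (e p.2)⟫ := by
      calc ⟪e p.2, (adjoint A) (e p.1)⟫
          = starRingEnd ℂ ⟪(adjoint A) (e p.1), e p.2⟫ := (inner_conj_symm _ _).symm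
        _ = starRingEnd ℂ ⟪e p.1, A (e p.2)⟫ := by rw [adjoint_inner_left]
    rw [h1, RCLike.norm_conj]
  refine hd2.prod.congr fun k => ?_
  exact (aux_hasSum_inner_sq e ((adjoint A) (e k))).tsum_eq

omit [Countable ι] in
lemma aux_cyc (e : HilbertBasis ι ℂ H) (X Y : H →L[ℂ] H)
    (hX : Summable fun j => ‖X (e j)‖ ^ 2) (hY : Summable fun j => ‖Y (e j)‖ ^ 2) :
    Summable (fun k => ⟪e k, (X * Y) (e k)⟫) ∧ Summable (fun k => ⟪e k, (Y * X) (e k)⟫) ∧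
      ∑' k, ⟪e k, (X * Y) (e k)⟫ = ∑' k, ⟪e k, (Y * X) (e k)⟫ := by
  set F : ι × ι → ℂ := fun p => ⟪e p.1, X (e p.2)⟫ * ⟪e p.2, Y (e p.1)⟫ with hF_def
  have hXd := aux_summable_double e X hX
  have hYd := aux_summable_double e Y hY
  have hYd' : Summable fun p : ι × ι => ‖⟪e p.2, Y (e p.1)⟫‖ ^ 2 := by
    have h := (Equiv.prodComm ι ι).summable_iff.2 hYd
    exact h.congr fun p => rfl
  have hFs : Summable F := by
    refine Summable.of_norm (Summable.of_nonneg_of_le (fun p => norm_nonneg _) (fun p => ?_)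
      (((hXd.add hYd').div_const 2)))
    have h2 := two_mul_le_add_sq ‖⟪e p.1, X (e p.2)⟫‖ ‖⟪e p.2, Y (e p.1)⟫‖
    have h3 : ‖F p‖ = ‖⟪e p.1, X (e p.2)⟫‖ * ‖⟪e p.2, Y (e p.1)⟫‖ := norm_mul _ _
    rw [h3]
    nlinarith [norm_nonneg (⟪e p.1, X (e p.2)⟫), norm_nonneg (⟪e p.2, Y (e p.1)⟫)]
  have hk : ∀ k, HasSum (fun j => F (k, j)) ⟪e k, (X * Y) (e k)⟫ := by
    intro k
    have h := e.hasSum_inner_mul_inner ((adjoint X) (e k)) (Y (e k))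
    have h1 : ⟪(adjoint X) (e k), Y (e k)⟫ = ⟪e k, (X * Y) (e k)⟫ := by
      rw [adjoint_inner_left]; rfl
    rw [h1] at h
    have h2 : (fun j => ⟪(adjoint X) (e k), e j⟫ * ⟪e j, Y (e k)⟫) = fun j => F (k, j) := by
      funext j
      rw [hF_def]
      simp only [adjoint_inner_left]
    rwa [h2] at h
  have hj : ∀ j, HasSum (fun k => F (k, j)) ⟪e j, (Y * X) (e j)⟫ := by
    intro j
    have h := e.hasSum_inner_mul_inner ((adjoint Y) (e j)) (X (e j))
    have h1 : ⟪(adjoint Y) (e j), X (e j)⟫ = ⟪e j, (Y * X) (e j)⟫ := by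
      rw [adjoint_inner_left]; rfl
    rw [h1] at h
    have h2 : (fun k => ⟪(adjoint Y) (e j), e k⟫ * ⟪e k, X (e j)⟫) = fun k => F (k, j) := by
      funext k
      rw [hF_def]
      simp only [adjoint_inner_left]
      ring
    rwa [h2] at h
  have hs1 : Summable (fun k => ⟪e k, (X * Y) (e k)⟫) :=
    hFs.prod.congr fun k => (hk k).tsum_eq
  have hs2 : Summable (fun j => ⟪e j, (Y * X) (e j)⟫) :=
    (hFs.prod_symm.prod.congr (fun j => (hj j).tsum_eq))
  refine ⟨hs1, hs2, ?_⟩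
  calc ∑' k, ⟪e k, (X * Y) (e k)⟫ = ∑' k, ∑' j, F (k, j) :=
        tsum_congr fun k => ((hk k).tsum_eq).symm
    _ = ∑' j, ∑' k, F (k, j) := by
        have hu : Summable (Function.uncurry fun k j => F (k, j)) := hFs
        exact (Summable.tsum_comm hu).symm
    _ = ∑' j, ⟪e j, (Y * X) (e j)⟫ := tsum_congr fun j => (hj j).tsum_eq

lemma aux_sqrt_sa {T : H →L[ℂ] H} (hT : T.IsPositive) :
    IsSelfAdjoint (CFC.sqrt T) ∧ CFC.sqrt T * CFC.sqrt T = T := by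
  have h0 : (0 : H →L[ℂ] H) ≤ T := (ContinuousLinearMap.nonneg_iff_isPositive T).2 hT
  exact ⟨IsSelfAdjoint.of_nonneg (CFC.sqrt_nonneg T), CFC.sqrt_mul_sqrt_self T h0⟩

omit [Countable ι] in
lemma aux_symm {A : H →L[ℂ] H} (hA : IsSelfAdjoint A) (x y : H) :
    ⟪A x, y⟫ = ⟪x, A y⟫ :=
  (isSelfAdjoint_iff_isSymmetric.1 hA) x y

omit [Countable ι] in
lemma aux_traceAlong_eq (e : HilbertBasis ι ℂ H) {A : H →L[ℂ] H}
    (h : Summable fun k => ⟪e k, A (e k)⟫) :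
    (Summable fun k => (⟪e k, A (e k)⟫).re) ∧
      (∑' k, (⟪e k, A (e k)⟫).re) = (∑' k, ⟪e k, A (e k)⟫).re := by
  have h2 := h.hasSum.mapL Complex.reCLM
  exact ⟨h2.summable, h2.tsum_eq⟩

omit [Countable ι] in
lemma aux_sqrt_hs (e : HilbertBasis ι ℂ H) {g : H →L[ℂ] H}
    (hsa : IsSelfAdjoint (CFC.sqrt g)) (hmul : CFC.sqrt g * CFC.sqrt g = g)
    (hds : Summable fun j => (⟪e j, g (e j)⟫).re) :
    Summable fun j => ‖(CFC.sqrt g) (e j)‖ ^ 2 := by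
  refine hds.congr fun j => ?_
  have h1 : ⟪e j, g (e j)⟫ = ⟪CFC.sqrt g (e j), CFC.sqrt g (e j)⟫ := by
    conv_lhs => rw [← hmul]
    rw [ContinuousLinearMap.mul_apply, ← aux_symm hsa]
  rw [h1, @inner_self_eq_norm_sq_to_K ℂ]
  norm_cast

lemma aux_rankOne_compact (f : H) : IsCompactOperator (⇑(rankOne f)) := by
  have h1 : IsCompactOperator (⇑(ContinuousLinearMap.toSpanSingleton ℂ f)) := by
    refine ⟨(fun c : ℂ => c • f) '' Metric.closedBall 0 1,
      (isCompact_closedBall 0 1).image ?_, ?_⟩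
    · exact (continuous_id.smul continuous_const)
    · refine Filter.mem_of_superset (Metric.closedBall_mem_nhds 0 one_pos) ?_
      intro c hc
      exact ⟨c, hc, rfl⟩
  have h2 := h1.comp_clm (innerSL ℂ f)
  have h3 : (⇑(ContinuousLinearMap.toSpanSingleton ℂ f)) ∘ (⇑(innerSL ℂ f)) = ⇑(rankOne f) := by
    funext x; rfl
  rwa [h3] at h2

lemma aux_sum_rankOne_compact (F : Finset ι) (g : ι → H) :
    IsCompactOperator (⇑(∑ j ∈ F, rankOne (g j))) := by
  classical
  induction F using Finset.induction_on with
  | empty => simpa using (isCompactOperator_zero (M₁ := H) (M₂ := H))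
  | insert a s hj ih =>
    rw [Finset.sum_insert hj]
    have h := (aux_rankOne_compact (g a)).add ih
    have hcoe : ⇑(rankOne (g a) + ∑ x ∈ s, rankOne (g x))
        = ⇑(rankOne (g a)) + ⇑(∑ x ∈ s, rankOne (g x)) := rfl
    rw [hcoe]
    exact h

omit [Countable ι] in
lemma aux_hasSum_rankOne (e : HilbertBasis ι ℂ H) (f : H) {g : H →L[ℂ] H}
    (hsa : IsSelfAdjoint g) :
    HasSum (fun k => (⟪e k, (rankOne f * g) (e k)⟫).re) ((⟪f, g f⟫).re) := by
  have h := (e.hasSum_inner_mul_inner (g f) f).mapL Complex.reCLM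
  have h1 : (fun i => Complex.reCLM (⟪g f, e i⟫ * ⟪e i, f⟫)) =
      fun k => (⟪e k, (rankOne f * g) (e k)⟫).re := by
    funext k
    have h2 : ⟪e k, (rankOne f * g) (e k)⟫ = ⟪f, g (e k)⟫ * ⟪e k, f⟫ := by
      simp [rankOne, ContinuousLinearMap.mul_apply, inner_smul_right]
    rw [h2, aux_symm hsa]
    rfl
  have h2 : Complex.reCLM ⟪g f, f⟫ = (⟪f, g f⟫).re := by
    rw [aux_symm hsa]; rfl
  rw [h1, h2] at h
  exact h

omit [Countable ι] in
lemma aux_traceAlong_sum_rankOne (e : HilbertBasis ι ℂ H) (F : Finset ι) (g : ι → H)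
    {A : H →L[ℂ] H} (hsa : IsSelfAdjoint A) :
    HasSum (fun k => (⟪e k, ((∑ j ∈ F, rankOne (g j)) * A) (e k)⟫).re)
      (∑ j ∈ F, (⟪g j, A (g j)⟫).re) := by
  have h := hasSum_sum (s := F) (f := fun j k => (⟪e k, (rankOne (g j) * A) (e k)⟫).re)
    (a := fun j => (⟪g j, A (g j)⟫).re) (fun j _ => aux_hasSum_rankOne e (g j) hsa)
  refine h.congr_fun fun k => ?_
  rw [← Complex.re_sum]
  congr 1
  rw [← inner_sum]
  congr 1
  simp [Finset.sum_mul, ContinuousLinearMap.sum_apply]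

omit [Countable ι] in
lemma aux_approx_pos (V : PosSAOp H) {ε : ℝ} (hε : 0 < ε) : (V.approx ε).IsPositive := by
  set R := V.res ε with hR
  have hspec : ∀ x : H, R x + ε • V.toPMap ⟨R x, V.res_mem ε hε x⟩ = x := V.res_spec ε hε
  have hsymR : ∀ x y : H, ⟪R x, y⟫ = ⟪x, R y⟫ := by
    intro x y
    conv_lhs => rw [← hspec y]
    conv_rhs => rw [← hspec x]
    rw [inner_add_right, inner_add_left, ← Complex.coe_smul, ← Complex.coe_smul,
      inner_smul_right, inner_smul_left, Complex.conj_ofReal]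
    congr 1
    exact congrArg (fun z => (ε : ℂ) * z)
      (V.symmetric ⟨R x, V.res_mem ε hε x⟩ ⟨R y, V.res_mem ε hε y⟩)
  have hsymA : ∀ x y : H, ⟪V.approx ε x, y⟫ = ⟪x, V.approx ε y⟫ := by
    intro x y
    simp only [PosSAOp.approx, ContinuousLinearMap.smul_apply, ContinuousLinearMap.sub_apply,
      ContinuousLinearMap.id_apply, ← Complex.coe_smul, inner_smul_left, inner_smul_right,
      Complex.conj_ofReal, inner_sub_left, inner_sub_right]
    rw [hsymR]
  constructor
  · exact fun x y => hsymA x y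
  · intro x
    rw [ContinuousLinearMap.reApplyInnerSelf_apply]
    set w : H := V.toPMap ⟨R x, V.res_mem ε hε x⟩ with hw
    have hxR : x - R x = ε • w := (eq_sub_of_add_eq' (hspec x)).symm
    have hA : V.approx ε x = ε⁻¹ • (x - R x) := rfl
    rw [hA, hxR, smul_smul, inv_mul_cancel₀ hε.ne', one_smul]
    have hx : ⟪w, x⟫ = ⟪w, R x⟫ + (ε : ℂ) * ⟪w, w⟫ := by
      conv_lhs => rw [← hspec x]
      rw [inner_add_right, ← Complex.coe_smul, inner_smul_right]
    rw [hx]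
    have h1 : 0 ≤ RCLike.re ⟪w, R x⟫ := by
      have h2 := V.nonneg ⟨R x, V.res_mem ε hε x⟩
      rw [inner_re_symm]
      exact h2
    have h2 : 0 ≤ RCLike.re ((ε : ℂ) * ⟪w, w⟫) := by
      rw [RCLike.mul_re]
      have h4 : 0 ≤ (⟪w, w⟫).re := by
        simpa using inner_self_nonneg (𝕜 := ℂ) (x := w)
      have him : RCLike.im ⟪w, w⟫ = 0 := inner_self_im (𝕜 := ℂ) w
      simp only [him, RCLike.re_to_complex, RCLike.im_to_complex, Complex.ofReal_re,
        Complex.ofReal_im, mul_zero, sub_zero]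
      nlinarith [h4, hε.le]
    rw [map_add]
    exact add_nonneg h1 h2

end AuxProof

section MainProof

open ContinuousLinearMap

set_option linter.unusedSectionVars false
set_option maxHeartbeats 2000000
set_option synthInstance.maxHeartbeats 400000

local notation "⟪" x ", " y "⟫" => @inner ℂ _ _ x y

/-- Weak-* lower semicontinuity of the extended trace `Tr(V·)` on positive
trace-class operators. -/
theorem extTrace_le_liminf_of_weakStar (e : HilbertBasis ι ℂ H) (V : PosSAOp H)
    (γ : ℕ → H →L[ℂ] H) (γlim : H →L[ℂ] H)
    (hpos : ∀ n, (γ n).IsPositive) (hs : ∀ n, diagSummable e (γ n))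
    (hposl : γlim.IsPositive) (hsl : diagSummable e γlim)
    (hconv : ∀ K : H →L[ℂ] H, IsCompactOperator K →
      Tendsto (fun n => traceAlong e (K * γ n)) atTop (nhds (traceAlong e (K * γlim)))) :
    extTrace e V γlim ≤ Filter.liminf (fun n => extTrace e V (γ n)) atTop := by
  refine iSup₂_le fun ε hε => ?_
  have hTpos : (V.approx ε).IsPositive := aux_approx_pos V hε
  set T := V.approx ε with hT_def
  obtain ⟨hBsa, hBB⟩ := aux_sqrt_sa hTpos
  set B := CFC.sqrt T with hB_def
  have key : ∀ g : H →L[ℂ] H, g.IsPositive → diagSummable e g →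
      (Summable fun j => (⟪B (e j), g (B (e j))⟫).re) ∧
      traceAlong e (T * g) = ∑' j, (⟪B (e j), g (B (e j))⟫).re := by
    intro g hp hds
    obtain ⟨hCsa, hCC⟩ := aux_sqrt_sa hp
    set C := CFC.sqrt g with hC_def
    have hChs : Summable fun j => ‖C (e j)‖ ^ 2 := aux_sqrt_hs e hCsa hCC hds
    have hmulhs : ∀ A : H →L[ℂ] H, Summable fun j => ‖(A * C) (e j)‖ ^ 2 := by
      intro A
      refine Summable.of_nonneg_of_le (fun j => sq_nonneg _) (fun j => ?_)
        (hChs.mul_left (‖A‖ ^ 2))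
      have h := A.le_opNorm (C (e j))
      calc ‖(A * C) (e j)‖ ^ 2 ≤ (‖A‖ * ‖C (e j)‖) ^ 2 := by
            exact pow_le_pow_left₀ (norm_nonneg _) h 2
        _ = ‖A‖ ^ 2 * ‖C (e j)‖ ^ 2 := by ring
    have hTChs := hmulhs T
    have hBChs := hmulhs B
    have hCBhs : Summable fun j => ‖(C * B) (e j)‖ ^ 2 := by
      have h := aux_adj_hs e (B * C) hBChs
      have hadj : adjoint (B * C) = C * B := by
        have : (B * C : H →L[ℂ] H) = B ∘L C := rfl
        rw [this, adjoint_comp, hCsa.adjoint_eq, hBsa.adjoint_eq]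
        rfl
      rwa [hadj] at h
    obtain ⟨hs1, hs1', heq1⟩ := aux_cyc e (T * C) C hTChs hChs
    obtain ⟨hs2, hs2', heq2⟩ := aux_cyc e (C * B) (B * C) hCBhs hBChs
    have hXY1 : (T * C) * C = T * g := by rw [mul_assoc, hCC]
    have hYX1 : C * (T * C) = (C * B) * (B * C) := by rw [← hBB]; simp only [mul_assoc]
    have hYX2 : (B * C) * (C * B) = B * (g * B) := by rw [← hCC]; simp only [mul_assoc]
    rw [hXY1] at hs1 heq1
    rw [hYX1] at hs1' heq1
    rw [hYX2] at hs2' heq2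
    have heq : ∑' k, ⟪e k, (T * g) (e k)⟫ = ∑' k, ⟪e k, (B * (g * B)) (e k)⟫ :=
      heq1.trans heq2
    have hdiag : ∀ k : ι, ⟪e k, (B * (g * B)) (e k)⟫ = ⟪B (e k), g (B (e k))⟫ := by
      intro k
      rw [ContinuousLinearMap.mul_apply, ← aux_symm hBsa, ContinuousLinearMap.mul_apply]
    constructor
    · refine ((hs2'.hasSum.mapL Complex.reCLM).summable).congr fun j => ?_
      rw [show Complex.reCLM ⟪e j, (B * (g * B)) (e j)⟫ = (⟪e j, (B * (g * B)) (e j)⟫).re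
        from rfl, hdiag j]
    · obtain ⟨hsre1, htre1⟩ := aux_traceAlong_eq e hs1
      obtain ⟨hsre2, htre2⟩ := aux_traceAlong_eq e hs2'
      have h0 : traceAlong e (T * g) = ∑' k, (⟪e k, (T * g) (e k)⟫).re := rfl
      rw [h0, htre1, heq, ← htre2]
      exact tsum_congr fun j => by rw [hdiag j]
  have keyl := key γlim hposl hsl
  have keyn := fun n => key (γ n) (hpos n) (hs n)
  have hnonnegl : ∀ j, 0 ≤ (⟪B (e j), γlim (B (e j))⟫).re := fun j => by
    exact (Complex.nonneg_iff.1 (hposl.inner_nonneg_right (B (e j)))).1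
  have hnonnegn : ∀ n j, 0 ≤ (⟪B (e j), (γ n) (B (e j))⟫).re := fun n j => by
    exact (Complex.nonneg_iff.1 ((hpos n).inner_nonneg_right (B (e j)))).1
  have hFbound : ∀ (F : Finset ι) (n : ℕ),
      ∑ j ∈ F, (⟪B (e j), (γ n) (B (e j))⟫).re ≤ traceAlong e (T * γ n) := by
    intro F n
    rw [(keyn n).2]
    exact Summable.sum_le_tsum F (fun j _ => hnonnegn n j) (keyn n).1
  have hFtend : ∀ F : Finset ι,
      Tendsto (fun n => ∑ j ∈ F, (⟪B (e j), (γ n) (B (e j))⟫).re) atTop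
        (nhds (∑ j ∈ F, (⟪B (e j), γlim (B (e j))⟫).re)) := by
    intro F
    have hcpt := aux_sum_rankOne_compact F (fun j => B (e j))
    have h := hconv _ hcpt
    have h1 : ∀ g : H →L[ℂ] H, g.IsPositive →
        traceAlong e ((∑ j ∈ F, rankOne (B (e j))) * g)
          = ∑ j ∈ F, (⟪B (e j), g (B (e j))⟫).re :=
      fun g hp => (aux_traceAlong_sum_rankOne e F (fun j => B (e j)) hp.isSelfAdjoint).tsum_eq
    rw [h1 γlim hposl] at h
    exact h.congr fun n => h1 (γ n) (hpos n)
  have hF_le : ∀ F : Finset ι,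
      ENNReal.ofReal (∑ j ∈ F, (⟪B (e j), γlim (B (e j))⟫).re)
        ≤ Filter.liminf (fun n => extTrace e V (γ n)) atTop := by
    intro F
    have h1 : Tendsto (fun n => ENNReal.ofReal (∑ j ∈ F, (⟪B (e j), (γ n) (B (e j))⟫).re))
        atTop (nhds (ENNReal.ofReal (∑ j ∈ F, (⟪B (e j), γlim (B (e j))⟫).re))) :=
      (ENNReal.continuous_ofReal.tendsto _).comp (hFtend F)
    rw [← h1.liminf_eq]
    refine Filter.liminf_le_liminf (Filter.Eventually.of_forall fun n => ?_)
    refine le_trans (ENNReal.ofReal_le_ofReal (hFbound F n)) ?_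
    exact le_iSup₂ (f := fun ε' (_ : 0 < ε') =>
      ENNReal.ofReal (traceAlong e (V.approx ε' * γ n))) ε hε
  rw [keyl.2, ENNReal.ofReal_tsum_of_nonneg hnonnegl keyl.1, ENNReal.tsum_eq_iSup_sum]
  refine iSup_le fun F => ?_
  rw [← ENNReal.ofReal_sum_of_nonneg (fun j _ => hnonnegl j)]
  exact hF_le F

end MainProof

end
end

section
/- If γ is a positive trace-class operator with Tr(Tγ) < ∞ and γ = Σ_n λ_n |φ_n⟩⟨φ_n| is its spectral decomposition with λ_n > 0, then φ_n ∈ Q(T) = D(T^{1/2}) for all n. -/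
open scoped ENNReal
open Filter

noncomputable section

variable {H : Type*} [NormedAddCommGroup H] [InnerProductSpace ℂ H] [CompleteSpace H]

variable {ι : Type*} [Countable ι]

section AuxLemmas

lemma inner_approx_self_nonneg (S : PosSAOp H) {ε : ℝ} (hε : 0 < ε) (x : H) :
    0 ≤ (inner ℂ x (S.approx ε x) : ℂ).re := by
  have hmem := S.res_mem ε hε x
  set y : S.toPMap.domain := ⟨S.res ε x, hmem⟩ with hy
  have hx : (y : H) + ε • S.toPMap y = x := S.res_spec ε hε x
  have hsub : x - S.res ε x = ε • S.toPMap y := by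
    have : S.res ε x = (y : H) := rfl
    rw [this, ← hx]; abel
  have happ : S.approx ε x = S.toPMap y := by
    simp only [PosSAOp.approx, ContinuousLinearMap.smul_apply, ContinuousLinearMap.sub_apply,
      ContinuousLinearMap.id_apply, hsub, smul_smul, inv_mul_cancel₀ hε.ne', one_smul]
  rw [happ, ← hx, inner_add_left]
  have h1 : (inner ℂ (ε • S.toPMap y : H) (S.toPMap y : H) : ℂ)
      = (ε : ℂ) * inner ℂ (S.toPMap y : H) (S.toPMap y : H) := by
    rw [← Complex.coe_smul, inner_smul_left, Complex.conj_ofReal]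
  rw [h1]
  have h2 := S.nonneg y
  have h3 : (0:ℝ) ≤ ((ε : ℂ) * inner ℂ (S.toPMap y : H) (S.toPMap y : H)).re := by
    rw [Complex.re_ofReal_mul]
    refine mul_nonneg hε.le ?_
    have := inner_self_nonneg (𝕜 := ℂ) (x := (S.toPMap y : H))
    simpa [RCLike.re_to_complex] using this
  simpa [Complex.add_re] using add_nonneg h2 h3

lemma traceAlong_mul_rankOne (e : HilbertBasis ι ℂ H) (A : H →L[ℂ] H) (ψ : H) :
    traceAlong e (A * rankOne ψ) = (inner ℂ ψ (A ψ) : ℂ).re := by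
  have h := Complex.reCLM.hasSum (e.hasSum_inner_mul_inner ψ (A ψ))
  refine HasSum.tsum_eq ?_
  convert h using 2 with k
  case e'_6 => simp
  simp [rankOne, ContinuousLinearMap.mul_apply, map_smul, inner_smul_right, mul_comm, traceAlong]

lemma mul_conj_eq_normsq (c : ℂ) : c * (starRingEnd ℂ) c = ((‖c‖^2 : ℝ) : ℂ) := by
  rw [Complex.mul_conj']
  push_cast [Complex.sq_norm]
  simp [Complex.normSq_eq_norm_sq]

end AuxLemmas

/-- Eigenvectors (with positive eigenvalue) of a positive trace-class operator of finite
kinetic energy lie in the form domain `Q(T)`. -/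
theorem eigvec_memFormDomain (e : HilbertBasis ι ℂ H) (S : PosSAOp H) (γ : H →L[ℂ] H)
    (hγ : γ.IsPositive) (hs : diagSummable e γ) (hT : extTrace e S γ ≠ ⊤)
    (lam : ℕ → ℝ) (φ : ℕ → H) (horth : Orthonormal ℂ φ) (hlam : ∀ n, 0 < lam n)
    (hdecomp : ∀ x : H, HasSum (fun n => lam n • ((inner ℂ (φ n) x : ℂ) • φ n)) (γ x)) :
    ∀ n, memFormDomain e S (φ n) := by
  intro n
  have hunit : ∀ m, ‖φ m‖ = 1 := fun m => horth.1 m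
  have hlam0 : ∀ m, (0:ℝ) ≤ lam m := fun m => (hlam m).le
  have hdecomp' : ∀ x : H, HasSum (fun m => (((lam m : ℂ) * inner ℂ (φ m) x) • φ m)) (γ x) := by
    intro x
    convert hdecomp x using 2 with m
    rw [mul_smul, Complex.coe_smul]
  -- the nonneg double family F
  set F : ι × ℕ → ℝ := fun p => lam p.2 * ‖(inner ℂ (φ p.2) (e p.1) : ℂ)‖^2 with hF
  have hFk : ∀ k : ι, HasSum (fun m => F (k, m)) ((inner ℂ (e k) (γ (e k)) : ℂ).re) := by
    intro k
    have h1 := (innerSL ℂ (e k)).hasSum (hdecomp' (e k))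
    have h2 := Complex.reCLM.hasSum h1
    convert h2 using 2 with m
    case e'_6 => simp [innerSL_apply_apply]
    simp only [Complex.reCLM_apply, innerSL_apply_apply, inner_smul_right]
    rw [← inner_conj_symm (e k) (φ m), mul_assoc, mul_conj_eq_normsq,
      Complex.re_ofReal_mul, Complex.ofReal_re]
  have hFnonneg : ∀ p : ι × ℕ, 0 ≤ F p := fun p => mul_nonneg (hlam0 p.2) (by positivity)
  have hsumF : Summable F := by
    rw [summable_prod_of_nonneg hFnonneg]
    refine ⟨fun k => (hFk k).summable, ?_⟩
    have h4 : (fun k : ι => ∑' m, F (k, m)) = fun k => (inner ℂ (e k) (γ (e k)) : ℂ).re :=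
      funext fun k => (hFk k).tsum_eq
    rw [h4]; exact hs
  have hFm : ∀ m, HasSum (fun k : ι => F (k, m)) (lam m) := by
    intro m
    have h := Complex.reCLM.hasSum
      ((e.hasSum_inner_mul_inner (φ m) (φ m)).mul_left (lam m : ℂ))
    have hval : ((lam m : ℂ) * (inner ℂ (φ m) (φ m))).re = lam m := by
      rw [inner_self_eq_norm_sq_to_K, Complex.re_ofReal_mul]
      simp [hunit m]
    simp only [Complex.reCLM_apply] at h
    rw [hval] at h
    convert h using 2 with k
    simp only [Complex.reCLM_apply, hF]
    rw [← inner_conj_symm (e k) (φ m), mul_conj_eq_normsq,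
      Complex.re_ofReal_mul, Complex.ofReal_re]
  have hlamsum : Summable lam := by
    have hswap : Summable (fun p : ℕ × ι => F (p.2, p.1)) := by
      have := ((Equiv.prodComm ℕ ι).summable_iff (f := F)).mpr hsumF
      exact this
    have h5 := (summable_prod_of_nonneg (fun p : ℕ × ι => hFnonneg (p.2, p.1))).mp hswap
    have h6 : (fun m : ℕ => ∑' k : ι, F (k, m)) = lam := funext fun m => (hFm m).tsum_eq
    rw [← h6]; exact h5.2
  -- key inequality for each ε
  have key : ∀ ε : ℝ, 0 < ε → lam n * (inner ℂ (φ n) (S.approx ε (φ n)) : ℂ).re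
      ≤ traceAlong e (S.approx ε * γ) := by
    intro ε hε
    set A := S.approx ε with hA
    set h : ι → ℕ → ℝ :=
      fun k m => ((lam m : ℂ) * (inner ℂ (φ m) (e k) * inner ℂ (e k) (A (φ m)))).re with hh
    have hk : ∀ k : ι, HasSum (fun m => h k m) ((inner ℂ (e k) ((A * γ) (e k)) : ℂ).re) := by
      intro k
      have h1 := A.hasSum (hdecomp' (e k))
      have h2 := (innerSL ℂ (e k)).hasSum h1
      have h3 := Complex.reCLM.hasSum h2
      convert h3 using 2 with m
      case e'_6 => simp [innerSL_apply_apply, ContinuousLinearMap.mul_apply]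
      simp only [hh, Complex.reCLM_apply, innerSL_apply_apply, map_smul, inner_smul_right,
        smul_eq_mul, ContinuousLinearMap.mul_apply]
      ring_nf
    have hm : ∀ m : ℕ, HasSum (fun k : ι => h k m)
        (lam m * (inner ℂ (φ m) (A (φ m)) : ℂ).re) := by
      intro m
      have h1 := Complex.reCLM.hasSum
        ((e.hasSum_inner_mul_inner (φ m) (A (φ m))).mul_left (lam m : ℂ))
      simp only [Complex.reCLM_apply] at h1
      rw [Complex.re_ofReal_mul] at h1
      exact h1
    -- absolute summability of the double family
    set F2 : ι × ℕ → ℝ := fun p => lam p.2 * ‖(inner ℂ (e p.1) (A (φ p.2)) : ℂ)‖^2 with hF2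
    have hF2m : ∀ m, HasSum (fun k : ι => F2 (k, m)) (lam m * ‖A (φ m)‖^2) := by
      intro m
      have h1 := Complex.reCLM.hasSum
        ((e.hasSum_inner_mul_inner (A (φ m)) (A (φ m))).mul_left (lam m : ℂ))
      have hval : ((lam m : ℂ) * (inner ℂ (A (φ m)) (A (φ m)))).re = lam m * ‖A (φ m)‖^2 := by
        rw [inner_self_eq_norm_sq_to_K, Complex.re_ofReal_mul]
        simp [← Complex.ofReal_pow]
      simp only [Complex.reCLM_apply] at h1
      rw [hval] at h1
      convert h1 using 2 with k
      simp only [Complex.reCLM_apply, hF2]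
      rw [← inner_conj_symm (e k) (A (φ m)), mul_conj_eq_normsq,
        Complex.re_ofReal_mul, Complex.ofReal_re, RCLike.norm_conj, norm_inner_symm]
    have hF2nonneg : ∀ p : ι × ℕ, 0 ≤ F2 p := fun p => mul_nonneg (hlam0 p.2) (by positivity)
    have hsumF2 : Summable F2 := by
      have hswap : Summable (fun p : ℕ × ι => F2 (p.2, p.1)) := by
        rw [summable_prod_of_nonneg (fun p : ℕ × ι => hF2nonneg (p.2, p.1))]
        refine ⟨fun m => (hF2m m).summable, ?_⟩
        have h6 : (fun m : ℕ => ∑' k : ι, F2 (k, m)) = fun m => lam m * ‖A (φ m)‖^2 :=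
          funext fun m => (hF2m m).tsum_eq
        rw [h6]
        refine Summable.of_nonneg_of_le (fun m => mul_nonneg (hlam0 m) (by positivity))
          (fun m => ?_) (hlamsum.mul_right (‖A‖^2))
        refine mul_le_mul_of_nonneg_left ?_ (hlam0 m)
        have hb := A.le_opNorm (φ m)
        rw [hunit m, mul_one] at hb
        exact pow_le_pow_left₀ (norm_nonneg _) hb 2
      exact ((Equiv.prodComm ℕ ι).summable_iff (f := F2)).mp hswap
    have habs : ∀ p : ι × ℕ, |Function.uncurry h p| ≤ (F p + F2 p) / 2 := by
      rintro ⟨k, m⟩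
      have h1 : |h k m| ≤ lam m * (‖(inner ℂ (φ m) (e k) : ℂ)‖ * ‖(inner ℂ (e k) (A (φ m)) : ℂ)‖) := by
        rw [hh]
        refine le_trans (Complex.abs_re_le_norm _) ?_
        rw [norm_mul, norm_mul, Complex.norm_real, Real.norm_eq_abs,
          abs_of_nonneg (hlam0 m)]
      refine le_trans h1 ?_
      have h2 : ‖(inner ℂ (φ m) (e k) : ℂ)‖ * ‖(inner ℂ (e k) (A (φ m)) : ℂ)‖
          ≤ (‖(inner ℂ (φ m) (e k) : ℂ)‖^2 + ‖(inner ℂ (e k) (A (φ m)) : ℂ)‖^2) / 2 := by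
        nlinarith [sq_nonneg (‖(inner ℂ (φ m) (e k) : ℂ)‖ - ‖(inner ℂ (e k) (A (φ m)) : ℂ)‖)]
      calc lam m * (‖(inner ℂ (φ m) (e k) : ℂ)‖ * ‖(inner ℂ (e k) (A (φ m)) : ℂ)‖)
          ≤ lam m * ((‖(inner ℂ (φ m) (e k) : ℂ)‖^2 + ‖(inner ℂ (e k) (A (φ m)) : ℂ)‖^2) / 2) :=
            mul_le_mul_of_nonneg_left h2 (hlam0 m)
        _ = (F (k, m) + F2 (k, m)) / 2 := by rw [hF, hF2]; ring
    have hsumh : Summable (Function.uncurry h) := by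
      refine Summable.of_abs (Summable.of_nonneg_of_le (fun p => abs_nonneg _) habs ?_)
      exact ((hsumF.add hsumF2).div_const 2)
    -- trace identity
    have htr : traceAlong e (A * γ) = ∑' m : ℕ, lam m * (inner ℂ (φ m) (A (φ m)) : ℂ).re := by
      have h7 : traceAlong e (A * γ) = ∑' k : ι, ∑' m : ℕ, h k m := by
        rw [traceAlong]
        exact tsum_congr fun k => ((hk k).tsum_eq).symm
      rw [h7, ← hsumh.tsum_comm]
      exact tsum_congr fun m => (hm m).tsum_eq
    rw [htr]
    have hnn : ∀ m, 0 ≤ lam m * (inner ℂ (φ m) (A (φ m)) : ℂ).re :=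
      fun m => mul_nonneg (hlam0 m) (inner_approx_self_nonneg S hε (φ m))
    have hsumc : Summable (fun m => lam m * (inner ℂ (φ m) (A (φ m)) : ℂ).re) := by
      refine Summable.of_nonneg_of_le hnn (fun m => ?_) (hlamsum.mul_right ‖A‖)
      refine mul_le_mul_of_nonneg_left ?_ (hlam0 m)
      refine le_trans (le_abs_self _) (le_trans (Complex.abs_re_le_norm _) ?_)
      refine le_trans (norm_inner_le_norm _ _) ?_
      rw [hunit m, one_mul]
      have hb := A.le_opNorm (φ m)
      rwa [hunit m, mul_one] at hb
    exact hsumc.le_tsum n fun j _ => hnn j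
  -- conclude
  rw [memFormDomain]
  have hle : extTrace e S (rankOne (φ n)) ≤ ENNReal.ofReal (lam n)⁻¹ * extTrace e S γ := by
    rw [extTrace]
    refine iSup₂_le fun ε hε => ?_
    rw [traceAlong_mul_rankOne]
    have hc : (inner ℂ (φ n) (S.approx ε (φ n)) : ℂ).re
        ≤ (lam n)⁻¹ * traceAlong e (S.approx ε * γ) := by
      have hkey := key ε hε
      have h8 := mul_le_mul_of_nonneg_left hkey (inv_nonneg.2 (hlam0 n))
      rwa [← mul_assoc, inv_mul_cancel₀ (hlam n).ne', one_mul] at h8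
    calc ENNReal.ofReal ((inner ℂ (φ n) (S.approx ε (φ n)) : ℂ).re)
        ≤ ENNReal.ofReal ((lam n)⁻¹ * traceAlong e (S.approx ε * γ)) :=
          ENNReal.ofReal_le_ofReal hc
      _ = ENNReal.ofReal (lam n)⁻¹ * ENNReal.ofReal (traceAlong e (S.approx ε * γ)) :=
          ENNReal.ofReal_mul (inv_nonneg.2 (hlam0 n))
      _ ≤ ENNReal.ofReal (lam n)⁻¹ * extTrace e S γ := by
          gcongr
          exact le_iSup₂ (f := fun (ε : ℝ) (_ : 0 < ε) =>
            ENNReal.ofReal (traceAlong e (S.approx ε * γ))) ε hε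
  exact ne_top_of_le_ne_top (ENNReal.mul_ne_top ENNReal.ofReal_ne_top hT) hle


end
end

section
/- Let t be a closed lower-semibounded Hermitian form with associated self-adjoint operator T, let w be a Hermitian form with infinitesimal t-bound, and v a Hermitian form with t-bound a_v < 1 (both with domain containing Q(T)). Then: (1) v + w has t-bound < 1; (2) v has (t+w)-bound < 1; (3) w has infinitesimal (t+v)-bound; and the form sums T∔(v+w), (T∔v)∔w, and (T∔w)∔v all coincide and are lower semibounded self-adjoint operators. -/
open scoped ENNReal
open Filter

noncomputable section

variable {H : Type*} [NormedAddCommGroup H] [InnerProductSpace ℂ H] [CompleteSpace H]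

variable {ι : Type*} [Countable ι]

/-- `A` is the self-adjoint operator associated (via Kato's first representation theorem)
to the sesquilinear form `c` with form domain `QT`. -/
def IsAssociatedOperator (QT : Submodule ℂ H) (c : H → H → ℂ) (A : H →ₗ.[ℂ] H) : Prop :=
  (A.domain : Set H) ⊆ (QT : Set H) ∧ Dense (A.domain : Set H) ∧
  (∀ (ψ : A.domain) (φ : H), φ ∈ QT → (inner ℂ φ (A ψ) : ℂ) = c φ (ψ : H)) ∧
  (∀ ψ ∈ QT, ∀ χ : H, (∀ φ ∈ QT, c φ ψ = (inner ℂ φ χ : ℂ)) → ψ ∈ A.domain)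

/-- A local type synonym used to carry the form inner-product structure. -/
def FormVec {H : Type*} [NormedAddCommGroup H] [InnerProductSpace ℂ H]
    (QT : Submodule ℂ H) : Type _ := ↥QT

def FormVec.mk {H : Type*} [NormedAddCommGroup H] [InnerProductSpace ℂ H]
    {QT : Submodule ℂ H} (x : ↥QT) : FormVec QT := x

def FormVec.out {H : Type*} [NormedAddCommGroup H] [InnerProductSpace ℂ H]
    {QT : Submodule ℂ H} (x : FormVec QT) : ↥QT := x

/-- Riesz representation for a coercive closed hermitian form. -/
lemma formRiesz {H : Type*} [NormedAddCommGroup H] [InnerProductSpace ℂ H]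
    (QT : Submodule ℂ H) (B : H → H → ℂ)
    (hherm : ∀ ψ φ, ψ ∈ QT → φ ∈ QT → B ψ φ = starRingEnd ℂ (B φ ψ))
    (hadd : ∀ ψ φ φ', ψ ∈ QT → φ ∈ QT → φ' ∈ QT → B ψ (φ + φ') = B ψ φ + B ψ φ')
    (hsmul : ∀ (c : ℂ) (ψ φ : H), ψ ∈ QT → φ ∈ QT → B ψ (c • φ) = c * B ψ φ)
    (c : ℝ) (hc : 0 < c) (hcoer : ∀ ψ ∈ QT, c * ‖ψ‖ ^ 2 ≤ (B ψ ψ).re)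
    (hcomp : ∀ u : ℕ → H, (∀ n, u n ∈ QT) →
      (∀ ε : ℝ, 0 < ε → ∃ N : ℕ, ∀ m n : ℕ, N ≤ m → N ≤ n →
        (B (u m - u n) (u m - u n)).re < ε) →
      ∃ l ∈ QT, Tendsto (fun n => (B (u n - l) (u n - l)).re) atTop (nhds 0))
    (χ : H) : ∃ ψ ∈ QT, ∀ φ ∈ QT, B φ ψ = (inner ℂ φ χ : ℂ) := by
  classical
  -- derived left-linearity
  have hadd_left : ∀ ψ φ φ', ψ ∈ QT → φ ∈ QT → φ' ∈ QT →
      B (φ + φ') ψ = B φ ψ + B φ' ψ := by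
    intro ψ φ φ' hψ hφ hφ'
    rw [hherm _ _ (QT.add_mem hφ hφ') hψ, hadd _ _ _ hψ hφ hφ', map_add,
      ← hherm _ _ hφ hψ, ← hherm _ _ hφ' hψ]
  have hsmul_left : ∀ (r : ℂ) (ψ φ : H), ψ ∈ QT → φ ∈ QT →
      B (r • φ) ψ = starRingEnd ℂ r * B φ ψ := by
    intro r ψ φ hψ hφ
    rw [hherm _ _ (QT.smul_mem r hφ) hψ, hsmul _ _ _ hψ hφ, map_mul,
      ← hherm _ _ hφ hψ]
  set E := FormVec QT with hE
  letI : AddCommGroup E := (inferInstance : AddCommGroup ↥QT)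
  letI : Module ℂ E := (inferInstance : Module ℂ ↥QT)
  have memQ : ∀ x : E, ((x.out : H)) ∈ QT := fun x => x.out.2
  set cd : InnerProductSpace.Core ℂ E :=
    { inner := fun x y => B (x.out : H) (y.out : H)
      conj_inner_symm := fun x y => (hherm _ _ (memQ x) (memQ y)).symm
      re_inner_nonneg := fun x => le_trans (by positivity) (hcoer _ (memQ x))
      definite := by
        intro x hx
        have h := hcoer _ (memQ x)
        rw [show B (x.out : H) (x.out : H) = 0 from hx] at h
        have h2 : c * ‖(x.out : H)‖ ^ 2 = 0 :=
          le_antisymm (by simpa using h) (mul_nonneg hc.le (sq_nonneg _))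
        rcases mul_eq_zero.mp h2 with h3 | h3
        · exact absurd h3 hc.ne'
        · exact Subtype.ext (norm_eq_zero.mp (pow_eq_zero_iff two_ne_zero |>.mp h3))
      add_left := fun x y z => hadd_left _ _ _ (memQ z) (memQ x) (memQ y)
      smul_left := fun x y r => hsmul_left r _ _ (memQ y) (memQ x) } with hcd
  letI : InnerProductSpace.Core ℂ E := cd
  letI : NormedAddCommGroup E := InnerProductSpace.Core.toNormedAddCommGroup (𝕜 := ℂ)
  letI : InnerProductSpace ℂ E := InnerProductSpace.ofCore cd.toCore
  have hinner : ∀ x y : E, (inner ℂ x y : ℂ) = B (x.out : H) (y.out : H) := fun _ _ => rfl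
  have hnorm : ∀ x : E, ‖x‖ ^ 2 = (B (x.out : H) (x.out : H)).re := by
    intro x
    rw [← inner_self_eq_norm_sq (𝕜 := ℂ) x, hinner, RCLike.re_to_complex]
  have hsub : ∀ x y : E, ((x - y).out : H) = (x.out : H) - (y.out : H) := fun _ _ => rfl
  have hnorm' : ∀ x y : E,
      ‖x - y‖ ^ 2 = (B ((x.out : H) - (y.out : H)) ((x.out : H) - (y.out : H))).re := by
    intro x y; rw [hnorm, hsub]
  letI : CompleteSpace E := by
    apply Metric.complete_of_cauchySeq_tendsto
    intro u hu
    have hBc : ∀ ε : ℝ, 0 < ε → ∃ N : ℕ, ∀ m n : ℕ, N ≤ m → N ≤ n →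
        (B (((u m).out : H) - ((u n).out : H))
          (((u m).out : H) - ((u n).out : H))).re < ε := by
      intro ε hε
      obtain ⟨N, hN⟩ := Metric.cauchySeq_iff.mp hu (Real.sqrt ε) (Real.sqrt_pos.mpr hε)
      refine ⟨N, fun m n hm hn => ?_⟩
      have h1 : ‖u m - u n‖ < Real.sqrt ε := by
        have := hN m hm n hn; rwa [dist_eq_norm] at this
      have h2 : ‖u m - u n‖ ^ 2 < ε := by
        have := pow_lt_pow_left₀ h1 (norm_nonneg _) two_ne_zero
        rwa [Real.sq_sqrt hε.le] at this
      rw [← hnorm']; exact h2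
    obtain ⟨l, hl, htend⟩ := hcomp (fun n => ((u n).out : H)) (fun n => memQ _) hBc
    refine ⟨FormVec.mk ⟨l, hl⟩, ?_⟩
    rw [Metric.tendsto_atTop]
    intro ε hε
    obtain ⟨N, hN⟩ := Metric.tendsto_atTop.mp htend (ε ^ 2) (by positivity)
    refine ⟨N, fun n hn => ?_⟩
    have h1 := hN n hn
    rw [Real.dist_eq, sub_zero] at h1
    have h2 : ‖u n - FormVec.mk ⟨l, hl⟩‖ ^ 2 < ε ^ 2 := by
      rw [hnorm']; exact lt_of_abs_lt h1
    have h3 : ‖u n - FormVec.mk ⟨l, hl⟩‖ < ε := lt_of_pow_lt_pow_left₀ 2 hε.le h2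
    rwa [dist_eq_norm]
  have hsqrtc : 0 < Real.sqrt c := Real.sqrt_pos.mpr hc
  have hnormH : ∀ x : E, ‖(x.out : H)‖ ≤ (Real.sqrt c)⁻¹ * ‖x‖ := by
    intro x
    have h1 : (Real.sqrt c * ‖(x.out : H)‖) ^ 2 ≤ ‖x‖ ^ 2 := by
      rw [mul_pow, Real.sq_sqrt hc.le, hnorm]; exact hcoer _ (memQ x)
    have h2 : Real.sqrt c * ‖(x.out : H)‖ ≤ ‖x‖ := by
      have := Real.sqrt_le_sqrt h1
      rwa [Real.sqrt_sq (by positivity), Real.sqrt_sq (norm_nonneg _)] at this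
    calc ‖(x.out : H)‖ = (Real.sqrt c)⁻¹ * (Real.sqrt c * ‖(x.out : H)‖) := by
          field_simp
      _ ≤ (Real.sqrt c)⁻¹ * ‖x‖ := by gcongr
  set llin : E →ₗ[ℂ] ℂ :=
    { toFun := fun x => (inner ℂ χ ((x.out : H)) : ℂ)
      map_add' := fun x y => inner_add_right _ _ _
      map_smul' := fun r x => inner_smul_right _ _ _ } with hllin
  have hbound : ∀ x : E, ‖llin x‖ ≤ ((Real.sqrt c)⁻¹ * ‖χ‖) * ‖x‖ := by
    intro x
    calc ‖llin x‖ ≤ ‖χ‖ * ‖(x.out : H)‖ := norm_inner_le_norm _ _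
      _ ≤ ‖χ‖ * ((Real.sqrt c)⁻¹ * ‖x‖) := by
          have := hnormH x
          exact mul_le_mul_of_nonneg_left this (norm_nonneg χ)
      _ = ((Real.sqrt c)⁻¹ * ‖χ‖) * ‖x‖ := by ring
  set l : E →L[ℂ] ℂ := llin.mkContinuous _ hbound with hl
  set y : E := (InnerProductSpace.toDual ℂ E).symm l with hy
  have hyspec : ∀ x : E, (inner ℂ y x : ℂ) = (inner ℂ χ ((x.out : H)) : ℂ) := by
    intro x
    have := InnerProductSpace.toDual_symm_apply (𝕜 := ℂ) (E := E) (x := x) (y := l)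
    rw [← hy] at this
    exact this
  refine ⟨(y.out : H), memQ y, fun φ hφ => ?_⟩
  have h1 := hyspec (FormVec.mk ⟨φ, hφ⟩)
  rw [hinner] at h1
  calc B φ (y.out : H) = starRingEnd ℂ (B (y.out : H) φ) := hherm _ _ hφ (memQ y)
    _ = starRingEnd ℂ (inner ℂ χ φ : ℂ) := congrArg (starRingEnd ℂ) h1
    _ = (inner ℂ φ χ : ℂ) := inner_conj_symm _ _

set_option maxHeartbeats 2000000 in
/-- KLMN combination theorem: if `w` has infinitesimal `t`-bound and `v` has `t`-bound
`a_v < 1`, then (1) `v+w` has `t`-bound `< 1`; (2) `v` has `(t+w)`-bound `< 1`;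
(3) `w` has infinitesimal `(t+v)`-bound; and the form sums `T∔(v+w)`, `(T∔v)∔w`,
`(T∔w)∔v` all coincide: there is a unique (lower semibounded, self-adjoint) operator
associated with the closed form `t+v+w` on `Q(T)`. -/
theorem klmn_combination (QT : Submodule ℂ H) (hdense : Dense (QT : Set H))
    (t v w : H → H → ℂ)
    (ht_herm : ∀ ψ φ, ψ ∈ QT → φ ∈ QT → t ψ φ = starRingEnd ℂ (t φ ψ))
    (ht_add : ∀ ψ φ φ', ψ ∈ QT → φ ∈ QT → φ' ∈ QT → t ψ (φ + φ') = t ψ φ + t ψ φ')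
    (ht_smul : ∀ (c : ℂ) (ψ φ), ψ ∈ QT → φ ∈ QT → t ψ (c • φ) = c * t ψ φ)
    (μt : ℝ) (ht_lb : ∀ ψ ∈ QT, -μt * ‖ψ‖ ^ 2 ≤ (t ψ ψ).re)
    -- `t` is closed: `QT` is complete for the form norm `Re t(ψ,ψ) + (μt+1)‖ψ‖²`
    (ht_closed : ∀ ψ : ℕ → H, (∀ n, ψ n ∈ QT) →
      (∀ ε : ℝ, 0 < ε → ∃ N : ℕ, ∀ m n : ℕ, N ≤ m → N ≤ n →
        (t (ψ m - ψ n) (ψ m - ψ n)).re + (μt + 1) * ‖ψ m - ψ n‖ ^ 2 < ε) →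
      ∃ ψl ∈ QT, Tendsto ψ atTop (nhds ψl) ∧
        Tendsto (fun n => (t (ψ n - ψl) (ψ n - ψl)).re + (μt + 1) * ‖ψ n - ψl‖ ^ 2)
          atTop (nhds 0))
    (hv_herm : ∀ ψ φ, ψ ∈ QT → φ ∈ QT → v ψ φ = starRingEnd ℂ (v φ ψ))
    (hv_add : ∀ ψ φ φ', ψ ∈ QT → φ ∈ QT → φ' ∈ QT → v ψ (φ + φ') = v ψ φ + v ψ φ')
    (hv_smul : ∀ (c : ℂ) (ψ φ), ψ ∈ QT → φ ∈ QT → v ψ (c • φ) = c * v ψ φ)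
    (hw_herm : ∀ ψ φ, ψ ∈ QT → φ ∈ QT → w ψ φ = starRingEnd ℂ (w φ ψ))
    (hw_add : ∀ ψ φ φ', ψ ∈ QT → φ ∈ QT → φ' ∈ QT → w ψ (φ + φ') = w ψ φ + w ψ φ')
    (hw_smul : ∀ (c : ℂ) (ψ φ), ψ ∈ QT → φ ∈ QT → w ψ (c • φ) = c * w ψ φ)
    (hv_bound : ∃ a b : ℝ, 0 ≤ a ∧ a < 1 ∧ 0 ≤ b ∧
      ∀ ψ ∈ QT, ‖v ψ ψ‖ ≤ a * (t ψ ψ).re + b * ‖ψ‖ ^ 2)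
    (hw_bound : ∀ ε : ℝ, 0 < ε → ∃ b : ℝ, 0 ≤ b ∧
      ∀ ψ ∈ QT, ‖w ψ ψ‖ ≤ ε * (t ψ ψ).re + b * ‖ψ‖ ^ 2) :
    (∃ a b : ℝ, 0 ≤ a ∧ a < 1 ∧ 0 ≤ b ∧
      ∀ ψ ∈ QT, ‖v ψ ψ + w ψ ψ‖ ≤ a * (t ψ ψ).re + b * ‖ψ‖ ^ 2) ∧
    (∃ a b : ℝ, 0 ≤ a ∧ a < 1 ∧ 0 ≤ b ∧
      ∀ ψ ∈ QT, ‖v ψ ψ‖ ≤ a * ((t ψ ψ).re + (w ψ ψ).re) + b * ‖ψ‖ ^ 2) ∧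
    (∀ ε : ℝ, 0 < ε → ∃ b : ℝ, 0 ≤ b ∧
      ∀ ψ ∈ QT, ‖w ψ ψ‖ ≤ ε * ((t ψ ψ).re + (v ψ ψ).re) + b * ‖ψ‖ ^ 2) ∧
    (∃ A : H →ₗ.[ℂ] H,
      IsAssociatedOperator QT (fun ψ φ => t ψ φ + v ψ φ + w ψ φ) A ∧
      (∀ x y : A.domain, (inner ℂ (x : H) (A y) : ℂ) = inner ℂ (A x : H) (y : H)) ∧
      (∃ μ : ℝ, ∀ x : A.domain, -μ * ‖(x : H)‖ ^ 2 ≤ (inner ℂ (x : H) (A x) : ℂ).re) ∧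
      (∃ lam : ℝ, ∀ χ : H, ∃ x : A.domain, A x + lam • (x : H) = χ) ∧
      (∀ A' : H →ₗ.[ℂ] H,
        IsAssociatedOperator QT (fun ψ φ => t ψ φ + v ψ φ + w ψ φ) A' → A' = A)) := by
  classical
  obtain ⟨av, bv, hav0, hav1, hbv0, hv⟩ := hv_bound
  obtain ⟨bw, hbw0, hw⟩ := hw_bound ((1 - av) / 2) (by linarith)
  set a : ℝ := (1 + av) / 2 with ha
  set b : ℝ := bv + bw with hb
  have ha0 : 0 ≤ a := by rw [ha]; linarith
  have ha1 : a < 1 := by rw [ha]; linarith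
  have hb0 : 0 ≤ b := by rw [hb]; linarith
  have hvw : ∀ ψ ∈ QT, ‖v ψ ψ + w ψ ψ‖ ≤ a * (t ψ ψ).re + b * ‖ψ‖ ^ 2 := by
    intro ψ hψ
    calc ‖v ψ ψ + w ψ ψ‖ ≤ ‖v ψ ψ‖ + ‖w ψ ψ‖ :=
          norm_add_le _ _
      _ ≤ (av * (t ψ ψ).re + bv * ‖ψ‖ ^ 2) + ((1 - av) / 2 * (t ψ ψ).re + bw * ‖ψ‖ ^ 2) :=
          add_le_add (hv ψ hψ) (hw ψ hψ)
      _ = a * (t ψ ψ).re + b * ‖ψ‖ ^ 2 := by rw [ha, hb]; ring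
  refine ⟨⟨a, b, ha0, ha1, hb0, hvw⟩, ?_, ?_, ?_⟩
  · -- (2) v has (t+w)-bound < 1
    refine ⟨a, bv + a * bw + max 0 ((a ^ 2 - av) * μt), ha0, ha1, ?_, ?_⟩
    · have h1 := le_max_left (0:ℝ) ((a ^ 2 - av) * μt)
      have h2 : 0 ≤ a * bw := mul_nonneg ha0 hbw0
      linarith
    · intro ψ hψ
      have h1 := hv ψ hψ
      have h2 := hw ψ hψ
      have hWre : -‖w ψ ψ‖ ≤ (w ψ ψ).re := by
        have := Complex.abs_re_le_norm (w ψ ψ)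
        have := neg_abs_le (w ψ ψ).re
        linarith [le_abs_self (w ψ ψ).re]
      have hT := ht_lb ψ hψ
      have key : a * ((1 + av) / 2 * (t ψ ψ).re) ≤
          a * (((t ψ ψ).re + (w ψ ψ).re) + bw * ‖ψ‖ ^ 2) := by
        apply mul_le_mul_of_nonneg_left _ ha0
        linarith
      have p2 : 0 ≤ (a ^ 2 - av) * ((t ψ ψ).re + μt * ‖ψ‖ ^ 2) := by
        apply mul_nonneg _ (by linarith)
        rw [ha]; nlinarith [sq_nonneg (1 - av)]
      have p3 : (a ^ 2 - av) * μt * ‖ψ‖ ^ 2 ≤ max 0 ((a ^ 2 - av) * μt) * ‖ψ‖ ^ 2 :=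
        mul_le_mul_of_nonneg_right (le_max_right _ _) (sq_nonneg _)
      have hexp : a * ((1 + av) / 2 * (t ψ ψ).re) = a ^ 2 * (t ψ ψ).re := by rw [ha]; ring
      nlinarith [key, p2, p3, h1]
  · -- (3) w has infinitesimal (t+v)-bound
    intro ε hε
    obtain ⟨bε, hbε0, hwε⟩ := hw_bound (ε * (1 - av)) (by nlinarith)
    refine ⟨ε * bv + bε, by positivity, ?_⟩
    intro ψ hψ
    have h1 := hv ψ hψ
    have h2 := hwε ψ hψ
    have hVre : -‖v ψ ψ‖ ≤ (v ψ ψ).re := by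
      have := Complex.abs_re_le_norm (v ψ ψ)
      linarith [le_abs_self (v ψ ψ).re, neg_abs_le (v ψ ψ).re]
    have key : ε * ((1 - av) * (t ψ ψ).re) ≤
        ε * (((t ψ ψ).re + (v ψ ψ).re) + bv * ‖ψ‖ ^ 2) := by
      apply mul_le_mul_of_nonneg_left _ hε.le
      linarith
    nlinarith [key, h2]
  · -- (4) the associated operator
    set lam : ℝ := (1 - a) * μt + b + 1 with hlam
    set B : H → H → ℂ := fun φ ψ => t φ ψ + v φ ψ + w φ ψ + (lam : ℂ) * (inner ℂ φ ψ : ℂ)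
      with hBdef
    have hreB : ∀ ψ ∈ QT, (B ψ ψ).re =
        (t ψ ψ).re + (v ψ ψ).re + (w ψ ψ).re + lam * ‖ψ‖ ^ 2 := by
      intro ψ hψ
      simp only [hBdef, Complex.add_re]
      congr 1
      have hz : (inner ℂ ψ ψ : ℂ).re = ‖ψ‖ ^ 2 := by
        have h := inner_self_eq_norm_sq (𝕜 := ℂ) ψ
        simpa using h
      have hzi : (inner ℂ ψ ψ : ℂ).im = 0 := by
        exact inner_self_im (𝕜 := ℂ) ψ
      rw [Complex.mul_re, Complex.ofReal_re, Complex.ofReal_im, hz, hzi]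
      ring
    have hvwre_low : ∀ ψ ∈ QT,
        -(a * (t ψ ψ).re + b * ‖ψ‖ ^ 2) ≤ (v ψ ψ).re + (w ψ ψ).re := by
      intro ψ hψ
      have h1 := hvw ψ hψ
      have h2 := Complex.abs_re_le_norm (v ψ ψ + w ψ ψ)
      rw [Complex.add_re] at h2
      linarith [neg_abs_le ((v ψ ψ).re + (w ψ ψ).re), le_abs_self ((v ψ ψ).re + (w ψ ψ).re)]
    have hvwre_upp : ∀ ψ ∈ QT,
        (v ψ ψ).re + (w ψ ψ).re ≤ a * (t ψ ψ).re + b * ‖ψ‖ ^ 2 := by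
      intro ψ hψ
      have h1 := hvw ψ hψ
      have h2 := Complex.abs_re_le_norm (v ψ ψ + w ψ ψ)
      rw [Complex.add_re] at h2
      linarith [le_abs_self ((v ψ ψ).re + (w ψ ψ).re)]
    have hlowN : ∀ ψ ∈ QT,
        (1 - a) * ((t ψ ψ).re + (μt + 1) * ‖ψ‖ ^ 2) + a * ‖ψ‖ ^ 2 ≤ (B ψ ψ).re := by
      intro ψ hψ
      rw [hreB ψ hψ]
      have := hvwre_low ψ hψ
      rw [hlam]
      nlinarith [this]
    have hBcoer : ∀ ψ ∈ QT, 1 * ‖ψ‖ ^ 2 ≤ (B ψ ψ).re := by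
      intro ψ hψ
      have h1 := hlowN ψ hψ
      have h2 := ht_lb ψ hψ
      have h3 : 0 ≤ (1 - a) * ((t ψ ψ).re + μt * ‖ψ‖ ^ 2) :=
        mul_nonneg (by linarith) (by nlinarith)
      nlinarith [h1, h3]
    set K : ℝ := max 0 (b + lam - (1 + a) * (μt + 1)) with hK
    set CU : ℝ := 1 + a + K with hCU
    have hK0 : 0 ≤ K := le_max_left _ _
    have hupp : ∀ ψ ∈ QT,
        (B ψ ψ).re ≤ CU * ((t ψ ψ).re + (μt + 1) * ‖ψ‖ ^ 2) := by
      intro ψ hψ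
      rw [hreB ψ hψ]
      have h1 := hvwre_upp ψ hψ
      have h2 := ht_lb ψ hψ
      have hnN : ‖ψ‖ ^ 2 ≤ (t ψ ψ).re + (μt + 1) * ‖ψ‖ ^ 2 := by nlinarith
      have hKn : (b + lam - (1 + a) * (μt + 1)) * ‖ψ‖ ^ 2 ≤ K * ‖ψ‖ ^ 2 :=
        mul_le_mul_of_nonneg_right (le_max_right _ _) (sq_nonneg _)
      have hKN : K * ‖ψ‖ ^ 2 ≤ K * ((t ψ ψ).re + (μt + 1) * ‖ψ‖ ^ 2) :=
        mul_le_mul_of_nonneg_left hnN hK0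
      rw [hCU]
      nlinarith [h1, hKn, hKN]
    have hBherm : ∀ ψ φ, ψ ∈ QT → φ ∈ QT → B ψ φ = starRingEnd ℂ (B φ ψ) := by
      intro ψ φ hψ hφ
      simp only [hBdef, map_add, map_mul, Complex.conj_ofReal, inner_conj_symm]
      rw [ht_herm _ _ hψ hφ, hv_herm _ _ hψ hφ, hw_herm _ _ hψ hφ]
    have hBadd : ∀ ψ φ φ', ψ ∈ QT → φ ∈ QT → φ' ∈ QT →
        B ψ (φ + φ') = B ψ φ + B ψ φ' := by
      intro ψ φ φ' hψ hφ hφ'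
      simp only [hBdef]
      rw [ht_add _ _ _ hψ hφ hφ', hv_add _ _ _ hψ hφ hφ', hw_add _ _ _ hψ hφ hφ',
        inner_add_right]
      ring
    have hBsmul : ∀ (cc : ℂ) (ψ φ : H), ψ ∈ QT → φ ∈ QT →
        B ψ (cc • φ) = cc * B ψ φ := by
      intro cc ψ φ hψ hφ
      simp only [hBdef]
      rw [ht_smul _ _ _ hψ hφ, hv_smul _ _ _ hψ hφ, hw_smul _ _ _ hψ hφ, inner_smul_right]
      ring
    have hBcomp : ∀ u : ℕ → H, (∀ n, u n ∈ QT) →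
        (∀ ε : ℝ, 0 < ε → ∃ N : ℕ, ∀ m n : ℕ, N ≤ m → N ≤ n →
          (B (u m - u n) (u m - u n)).re < ε) →
        ∃ l ∈ QT, Tendsto (fun n => (B (u n - l) (u n - l)).re) atTop (nhds 0) := by
      intro u hu hc'
      have hNc : ∀ ε : ℝ, 0 < ε → ∃ N : ℕ, ∀ m n : ℕ, N ≤ m → N ≤ n →
          (t (u m - u n) (u m - u n)).re + (μt + 1) * ‖u m - u n‖ ^ 2 < ε := by
        intro ε hε
        obtain ⟨N, hN⟩ := hc' ((1 - a) * ε) (mul_pos (by linarith) hε)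
        refine ⟨N, fun m n hm hn => ?_⟩
        have hd : u m - u n ∈ QT := QT.sub_mem (hu m) (hu n)
        have h1 := hlowN _ hd
        have h2 := hN m n hm hn
        have ha' : 0 ≤ a * ‖u m - u n‖ ^ 2 := mul_nonneg ha0 (sq_nonneg _)
        have h3 : (1 - a) * ((t (u m - u n) (u m - u n)).re + (μt + 1) * ‖u m - u n‖ ^ 2) <
            (1 - a) * ε := by linarith
        exact lt_of_mul_lt_mul_left h3 (by linarith)
      obtain ⟨ψl, hψl, -, htendN⟩ := ht_closed u hu hNc
      have hd : ∀ n, u n - ψl ∈ QT := fun n => QT.sub_mem (hu n) hψl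
      refine ⟨ψl, hψl, ?_⟩
      refine squeeze_zero (fun n => ?_) (fun n => hupp _ (hd n))
        (by simpa using htendN.const_mul CU)
      linarith [hBcoer _ (hd n), sq_nonneg ‖u n - ψl‖]
    have hRiesz := fun χ => formRiesz QT B hBherm hBadd hBsmul 1 one_pos hBcoer hBcomp χ
    -- uniqueness of representing vectors
    have huniqv : ∀ x y : H, (∀ φ ∈ QT, (inner ℂ φ x : ℂ) = inner ℂ φ y) → x = y := by
      intro x y h
      exact hdense.eq_of_inner_right ℂ (fun vv hvv => h vv hvv)
    -- the maximal operator
    set P : H → H → Prop :=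
      fun ψ χ => ∀ φ ∈ QT, t φ ψ + v φ ψ + w φ ψ = (inner ℂ φ χ : ℂ) with hPdef
    have hPadd : ∀ (ψ ψ' χ χ' : H), ψ ∈ QT → ψ' ∈ QT → P ψ χ → P ψ' χ' →
        P (ψ + ψ') (χ + χ') := by
      intro ψ ψ' χ χ' hψ hψ' h h' φ hφ
      rw [ht_add _ _ _ hφ hψ hψ', hv_add _ _ _ hφ hψ hψ', hw_add _ _ _ hφ hψ hψ',
        inner_add_right, ← h φ hφ, ← h' φ hφ]
      ring
    have hPsmul : ∀ (cc : ℂ) (ψ χ : H), ψ ∈ QT → P ψ χ → P (cc • ψ) (cc • χ) := by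
      intro cc ψ χ hψ h φ hφ
      rw [ht_smul _ _ _ hφ hψ, hv_smul _ _ _ hφ hψ, hw_smul _ _ _ hφ hψ,
        inner_smul_right, ← h φ hφ]
      ring
    have hPzero : P 0 0 := by
      intro φ hφ
      have h0 : (0 : H) = (0 : ℂ) • (0 : H) := (zero_smul ℂ (0 : H)).symm
      rw [h0, ht_smul _ _ _ hφ QT.zero_mem, hv_smul _ _ _ hφ QT.zero_mem,
        hw_smul _ _ _ hφ QT.zero_mem, inner_smul_right]
      ring
    set dom : Submodule ℂ H :=
      { carrier := {ψ | ψ ∈ QT ∧ ∃ χ, P ψ χ}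
        add_mem' := by
          rintro ψ ψ' ⟨hψ, χ, hχ⟩ ⟨hψ', χ', hχ'⟩
          exact ⟨QT.add_mem hψ hψ', χ + χ', hPadd _ _ _ _ hψ hψ' hχ hχ'⟩
        zero_mem' := ⟨QT.zero_mem, 0, hPzero⟩
        smul_mem' := by
          rintro cc ψ ⟨hψ, χ, hχ⟩
          exact ⟨QT.smul_mem cc hψ, cc • χ, hPsmul cc _ _ hψ hχ⟩ } with hdom
    have hdomQ : ∀ x : dom, (x : H) ∈ QT := fun x => x.2.1
    have hF0 : ∀ x : dom, ∃ χ, P (x : H) χ := fun x => x.2.2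
    set F : dom → H := fun x => (hF0 x).choose with hFdef
    have hF : ∀ x : dom, P (x : H) (F x) := fun x => (hF0 x).choose_spec
    have hPuniq : ∀ (ψ χ χ' : H), P ψ χ → P ψ χ' → χ = χ' := by
      intro ψ χ χ' h h'
      exact huniqv _ _ (fun φ hφ => by rw [← h φ hφ, h' φ hφ])
    set Flin : dom →ₗ[ℂ] H :=
      { toFun := F
        map_add' := fun x y =>
          hPuniq _ _ _ (hF (x + y)) (hPadd _ _ _ _ (hdomQ x) (hdomQ y) (hF x) (hF y))
        map_smul' := fun cc x =>
          hPuniq _ _ _ (hF (cc • x)) (hPsmul cc _ _ (hdomQ x) (hF x)) } with hFlin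
    set A : H →ₗ.[ℂ] H := ⟨dom, Flin⟩ with hA
    have hAval : ∀ x : dom, A x = F x := fun _ => rfl
    -- surjectivity of A + lam
    have hsurj : ∀ χ : H, ∃ x : dom, F x + (lam : ℂ) • (x : H) = χ := by
      intro χ
      obtain ⟨ψ, hψ, hBψ⟩ := hRiesz χ
      have hPψ : P ψ (χ - (lam : ℂ) • ψ) := by
        intro φ hφ
        have h1 := hBψ φ hφ
        rw [inner_sub_right, inner_smul_right]
        simp only [hBdef] at h1
        linear_combination h1
      refine ⟨⟨ψ, hψ, _, hPψ⟩, ?_⟩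
      have : F ⟨ψ, hψ, _, hPψ⟩ = χ - (lam : ℂ) • ψ := hPuniq _ _ _ (hF _) hPψ
      rw [this]
      abel
    -- density of the domain
    have hdenseA : Dense (dom : Set H) := by
      rw [Submodule.dense_iff_topologicalClosure_eq_top,
        Submodule.topologicalClosure_eq_top_iff]
      rw [Submodule.eq_bot_iff]
      intro χ hχ
      obtain ⟨x, hx⟩ := hsurj χ
      have h0 : (inner ℂ (x : H) χ : ℂ) = 0 := (Submodule.mem_orthogonal _ _).mp hχ _ x.2
      have h1 : (inner ℂ (x : H) (F x + (lam : ℂ) • (x : H)) : ℂ) = B (x : H) (x : H) := by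
        rw [inner_add_right, inner_smul_right]
        simp only [hBdef]
        rw [← hF x _ (hdomQ x)]
      have h2 : (B (x : H) (x : H)).re = 0 := by rw [← h1, hx, h0, Complex.zero_re]
      have h3 := hBcoer _ (hdomQ x)
      rw [h2] at h3
      have h4 : (x : H) = 0 := by
        have : ‖(x : H)‖ ^ 2 ≤ 0 := by linarith
        have := le_antisymm this (sq_nonneg _)
        exact norm_eq_zero.mp (pow_eq_zero_iff two_ne_zero |>.mp this)
      have h5 : x = (0 : dom) := Subtype.ext h4
      have h6 : F (0 : dom) = 0 := hPuniq 0 _ _ (by simpa using hF (0 : dom)) hPzero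
      rw [← hx, h5, h6]
      simp
    refine ⟨A, ⟨fun ψ hψ => hψ.1, hdenseA, ?_, ?_⟩, ?_, ?_, ?_, ?_⟩
    · intro ψ φ hφ
      exact (hF ψ φ hφ).symm
    · intro ψ hψ χ h
      exact ⟨hψ, χ, h⟩
    · -- symmetry
      intro x y
      have hs_herm : ∀ ψ φ, ψ ∈ QT → φ ∈ QT →
          t ψ φ + v ψ φ + w ψ φ = starRingEnd ℂ (t φ ψ + v φ ψ + w φ ψ) := by
        intro ψ φ hψ hφ
        simp only [map_add]
        rw [ht_herm _ _ hψ hφ, hv_herm _ _ hψ hφ, hw_herm _ _ hψ hφ]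
      calc (inner ℂ (x : H) (A y) : ℂ)
          = t (x : H) (y : H) + v (x : H) (y : H) + w (x : H) (y : H) :=
            (hF y _ (hdomQ x)).symm
        _ = starRingEnd ℂ (t (y : H) (x : H) + v (y : H) (x : H) + w (y : H) (x : H)) :=
            hs_herm _ _ (hdomQ x) (hdomQ y)
        _ = starRingEnd ℂ (inner ℂ (y : H) (A x) : ℂ) := by rw [hF x _ (hdomQ y)]; rfl
        _ = (inner ℂ (A x : H) (y : H) : ℂ) := inner_conj_symm _ _
    · -- lower bound
      refine ⟨(1 - a) * μt + b, fun x => ?_⟩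
      have h1 : (inner ℂ (x : H) (A x) : ℂ) =
          t (x : H) (x : H) + v (x : H) (x : H) + w (x : H) (x : H) :=
        (hF x _ (hdomQ x)).symm
      rw [h1]
      simp only [Complex.add_re]
      have h2 := hvwre_low _ (hdomQ x)
      have h3 := ht_lb _ (hdomQ x)
      nlinarith [h2, h3]
    · -- surjectivity
      refine ⟨lam, fun χ => ?_⟩
      obtain ⟨x, hx⟩ := hsurj χ
      refine ⟨x, ?_⟩
      rw [hAval, RCLike.real_smul_eq_coe_smul (K := ℂ)]
      exact hx
    · -- uniqueness
      intro A' hA'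
      obtain ⟨hsub', hdense', hrep', hmax'⟩ := hA'
      have hdomeq : A'.domain = dom := by
        ext ψ
        constructor
        · intro hψ'
          refine ⟨hsub' hψ', A' ⟨ψ, hψ'⟩, fun φ hφ => ?_⟩
          exact (hrep' ⟨ψ, hψ'⟩ φ hφ).symm
        · rintro ⟨hψ, χ, hχ⟩
          exact hmax' ψ hψ χ hχ
      refine LinearPMap.ext hdomeq ?_
      intro z hzx hzy
      set x : A'.domain := ⟨z, hzx⟩
      set y : dom := ⟨z, hzy⟩
      have hxy : (x : H) = (y : H) := rfl
      have hyQ : (y : H) ∈ QT := hdomQ y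
      refine huniqv _ _ (fun φ hφ => ?_)
      have h1 : (inner ℂ φ (A' x) : ℂ) = t φ (x : H) + v φ (x : H) + w φ (x : H) :=
        hrep' x φ hφ
      have h2 := hF y φ hφ
      rw [h1, hxy, h2]
      rfl

end
end

section
/- For every unit vector ψ in an infinite-dimensional separable Hilbert space H and every integer N ≥ 1, there exist rank-N orthogonal projections q₀, q₁, …, q_{N−1}, r₁, …, r_{N−1} such that N|ψ⟩⟨ψ| = q₀ + Σ_{k=1}^{N−1}(q_k − r_k). -/
open scoped ENNReal
open Filter

noncomputable section

variable {H : Type*} [NormedAddCommGroup H] [InnerProductSpace ℂ H] [CompleteSpace H]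

variable {ι : Type*} [Countable ι]

/-- `P` is an orthogonal projection of rank `N`. -/
def IsRankNProj (N : ℕ) (P : H →L[ℂ] H) : Prop :=
  IsSelfAdjoint P ∧ P * P = P ∧
    Module.finrank ℂ (LinearMap.range (P : H →ₗ[ℂ] H)) = N


section Aux

local notation "⟪" x ", " y "⟫" => @inner ℂ _ _ x y

lemma rankOne_apply' (φ x : H) : rankOne φ x = ⟪φ, x⟫ • φ := rfl

lemma rankOne_isSelfAdjoint (φ : H) : IsSelfAdjoint (rankOne φ) := by
  rw [ContinuousLinearMap.isSelfAdjoint_iff_isSymmetric]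
  intro x y
  simp only [ContinuousLinearMap.coe_coe, rankOne_apply', inner_smul_left, inner_smul_right,
    inner_conj_symm]
  ring

lemma rankOne_mul_rankOne_apply (φ χ x : H) :
    (rankOne φ * rankOne χ) x = (⟪χ, x⟫ * ⟪φ, χ⟫) • φ := by
  simp [ContinuousLinearMap.mul_apply, rankOne_apply', inner_smul_right, smul_smul]

/-- Sum of rank-one projections over a locally orthonormal family. -/
lemma Qs_mul (u : ℕ → H) (s : Finset ℕ)
    (h : ∀ i ∈ s, ∀ j ∈ s, ⟪u i, u j⟫ = if i = j then 1 else 0) :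
    (∑ i ∈ s, rankOne (u i)) * (∑ i ∈ s, rankOne (u i)) = ∑ i ∈ s, rankOne (u i) := by
  rw [Finset.sum_mul_sum]
  refine Finset.sum_congr rfl fun i hi => ?_
  refine Finset.sum_eq_single_of_mem i hi (fun j hj hji => ?_) |>.trans ?_
  · ext x
    have h0 : ⟪u i, u j⟫ = 0 := by simpa [hji.symm] using h i hi j hj
    rw [rankOne_mul_rankOne_apply, h0]
    simp
  · ext x
    have h1 : ⟪u i, u i⟫ = 1 := by simpa using h i hi i hi
    rw [rankOne_mul_rankOne_apply, h1]
    simp [rankOne_apply']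

lemma Qs_isSelfAdjoint (u : ℕ → H) (s : Finset ℕ) :
    IsSelfAdjoint (∑ i ∈ s, rankOne (u i)) := by
  unfold IsSelfAdjoint
  rw [star_sum]
  exact Finset.sum_congr rfl fun i _ => rankOne_isSelfAdjoint (u i)

lemma Qs_apply (u : ℕ → H) (s : Finset ℕ) (x : H) :
    (∑ i ∈ s, rankOne (u i)) x = ∑ i ∈ s, ⟪u i, x⟫ • u i := by
  simp [ContinuousLinearMap.sum_apply, rankOne_apply']

lemma Qs_rank (u : ℕ → H) (s : Finset ℕ)
    (h : ∀ i ∈ s, ∀ j ∈ s, ⟪u i, u j⟫ = if i = j then 1 else 0) :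
    Module.finrank ℂ
      (LinearMap.range ((∑ i ∈ s, rankOne (u i) : H →L[ℂ] H) : H →ₗ[ℂ] H)) = s.card := by
  classical
  have hON : Orthonormal ℂ (fun i : s => u i) := by
    rw [orthonormal_iff_ite]
    intro i j
    have := h i i.2 j j.2
    rw [this]
    by_cases hij : i = j
    · subst hij; simp
    · have hne : (i : ℕ) ≠ j := fun e => hij (Subtype.ext e)
      simp [hij, hne]
  have happ : ∀ i ∈ s, (∑ j ∈ s, rankOne (u j)) (u i) = u i := by
    intro i hi
    rw [Qs_apply]
    rw [Finset.sum_eq_single_of_mem i hi (fun j hj hji => by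
      have h0 : ⟪u j, u i⟫ = 0 := by simpa [hji] using h j hj i hi
      simp [h0])]
    have h1 : ⟪u i, u i⟫ = 1 := by simpa using h i hi i hi
    rw [h1, one_smul]
  have hrange : LinearMap.range ((∑ i ∈ s, rankOne (u i) : H →L[ℂ] H) : H →ₗ[ℂ] H)
      = Submodule.span ℂ (Set.range fun i : s => u i) := by
    apply le_antisymm
    · rintro _ ⟨x, rfl⟩
      have : (∑ i ∈ s, rankOne (u i) : H →L[ℂ] H) x = ∑ i ∈ s, ⟪u i, x⟫ • u i := Qs_apply u s x
      simp only [ContinuousLinearMap.coe_coe]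
      rw [this]
      exact Submodule.sum_mem _ fun i hi =>
        Submodule.smul_mem _ _ (Submodule.subset_span ⟨⟨i, hi⟩, rfl⟩)
    · rw [Submodule.span_le]
      rintro _ ⟨i, rfl⟩
      exact ⟨u i, by simpa using happ i i.2⟩
  rw [hrange, finrank_span_eq_card hON.linearIndependent, Fintype.card_coe]

lemma IsRankNProj_Qs (u : ℕ → H) (s : Finset ℕ)
    (h : ∀ i ∈ s, ∀ j ∈ s, ⟪u i, u j⟫ = if i = j then 1 else 0) :
    IsRankNProj s.card (∑ i ∈ s, rankOne (u i)) :=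
  ⟨Qs_isSelfAdjoint u s, Qs_mul u s h, Qs_rank u s h⟩

lemma orthonormal_snoc {n : ℕ} {g : Fin n → H} (hg : Orthonormal ℂ g) {u : H}
    (hu : ‖u‖ = 1) (hort : ∀ i, ⟪g i, u⟫ = 0) :
    Orthonormal ℂ (Fin.snoc g u : Fin (n + 1) → H) := by
  rw [orthonormal_iff_ite] at hg ⊢
  intro i j
  induction i using Fin.lastCases with
  | last =>
    induction j using Fin.lastCases with
    | last => simp [Fin.snoc_last, inner_self_eq_norm_sq_to_K, hu]
    | cast j =>
      have : ⟪u, g j⟫ = 0 := by rw [← inner_conj_symm, hort j, map_zero]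
      simp [Fin.snoc_last, Fin.snoc_castSucc, this, (Fin.castSucc_lt_last j).ne']
  | cast i =>
    induction j using Fin.lastCases with
    | last => simp [Fin.snoc_last, Fin.snoc_castSucc, hort i, (Fin.castSucc_lt_last i).ne]
    | cast j => simpa [Fin.snoc_castSucc, Fin.castSucc_inj] using hg i j

lemma exists_orthonormal_cons (hinf : ¬ FiniteDimensional ℂ H) (ψ : H) (hψ : ‖ψ‖ = 1) :
    ∀ n : ℕ, ∃ f : Fin n → H, Orthonormal ℂ (Fin.cons ψ f : Fin (n + 1) → H) := by
  intro n
  induction n with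
  | zero =>
    refine ⟨Fin.elim0, ?_⟩
    rw [orthonormal_iff_ite]
    intro i j
    fin_cases i; fin_cases j
    simp [inner_self_eq_norm_sq_to_K, hψ]
  | succ n ih =>
    obtain ⟨f, hf⟩ := ih
    set g : Fin (n + 1) → H := Fin.cons ψ f with hgdef
    set K : Submodule ℂ H := Submodule.span ℂ (Set.range g) with hK
    have hfin : FiniteDimensional ℂ K := FiniteDimensional.span_of_finite ℂ (Set.finite_range g)
    have hKne : K ≠ ⊤ := by
      intro htop
      apply hinf
      have : FiniteDimensional ℂ (⊤ : Submodule ℂ H) := htop ▸ hfin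
      exact Module.Finite.equiv (Submodule.topEquiv (R := ℂ) (M := H))
    have hbot : Kᗮ ≠ ⊥ := fun hb => hKne (Submodule.orthogonal_eq_bot_iff.mp hb)
    obtain ⟨x, hxK, hx0⟩ := Submodule.exists_mem_ne_zero_of_ne_bot hbot
    set v : H := (‖x‖ : ℂ)⁻¹ • x with hv
    have hvnorm : ‖v‖ = 1 := by
      rw [hv, norm_smul]
      simp [norm_ne_zero_iff.mpr hx0, inv_mul_cancel₀]
    have hvK : v ∈ Kᗮ := Submodule.smul_mem _ _ hxK
    have hort : ∀ i : Fin (n + 1), ⟪g i, v⟫ = 0 := fun i =>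
      (Submodule.mem_orthogonal K v).mp hvK (g i) (Submodule.subset_span ⟨i, rfl⟩)
    refine ⟨Fin.snoc f v, ?_⟩
    rw [Fin.cons_snoc_eq_snoc_cons]
    exact orthonormal_snoc hf hvnorm hort

end Aux

/-- For every unit vector `ψ` and `N ≥ 1` there are rank-`N` orthogonal projections
`q₀, …, q_{N-1}, r₁, …, r_{N-1}` with `N|ψ⟩⟨ψ| = q₀ + Σ_{k=1}^{N-1} (q_k - r_k)`. -/
theorem rankOne_eq_affine_combination_of_projections
    [TopologicalSpace.SeparableSpace H] (hinf : ¬ FiniteDimensional ℂ H)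
    (ψ : H) (hψ : ‖ψ‖ = 1) (N : ℕ) (hN : 1 ≤ N) :
    ∃ q r : ℕ → H →L[ℂ] H,
      IsRankNProj N (q 0) ∧
      (∀ k : ℕ, 1 ≤ k → k ≤ N - 1 → IsRankNProj N (q k) ∧ IsRankNProj N (r k)) ∧
      (N : ℂ) • rankOne ψ = q 0 + ∑ k ∈ Finset.Icc 1 (N - 1), (q k - r k) := by
  classical
  obtain ⟨f, hf⟩ := exists_orthonormal_cons hinf ψ hψ (N * N)
  set g : Fin (N * N + 1) → H := Fin.cons ψ f with hg
  set u : ℕ → H := fun i => if h : i < N * N + 1 then g ⟨i, h⟩ else 0 with hu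
  have hu0 : u 0 = ψ := by
    simp only [hu]
    rw [dif_pos (Nat.succ_pos _)]
    rfl
  have hloc : ∀ s : Finset ℕ, (∀ i ∈ s, i < N * N + 1) →
      ∀ i ∈ s, ∀ j ∈ s, (inner ℂ (u i) (u j) : ℂ) = if i = j then 1 else 0 := by
    intro s hs i hi j hj
    simp only [hu]
    rw [dif_pos (hs i hi), dif_pos (hs j hj)]
    have := orthonormal_iff_ite.mp hf ⟨i, hs i hi⟩ ⟨j, hs j hj⟩
    simpa [Fin.mk.injEq] using this
  have hNN : N ≤ N * N := Nat.le_mul_of_pos_left N (by omega)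
  have hmul : N * (N - 1) + N = N * N := by
    cases N with
    | zero => omega
    | succ n => simp [Nat.mul_succ]
  set C : ℕ → Finset ℕ := fun k => (Finset.range (N - 1)).image (fun j => N * k + j + 1)
    with hC
  have hCmem : ∀ k i, i ∈ C k ↔ ∃ j < N - 1, N * k + j + 1 = i := by
    intro k i; rw [hC]; simp
  have hCbound : ∀ k, k ≤ N - 1 → ∀ i ∈ C k, i < N * N + 1 := by
    intro k hk i hi
    obtain ⟨j, hj, rfl⟩ := (hCmem k i).mp hi
    have h1 : N * k ≤ N * (N - 1) := Nat.mul_le_mul_left N hk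
    omega
  have hC0 : ∀ k, 0 ∉ C k := by
    intro k h
    obtain ⟨j, hj, hji⟩ := (hCmem k 0).mp h
    omega
  have hCk : ∀ k, 1 ≤ k → k ∉ C k := by
    intro k hk h
    obtain ⟨j, hj, hji⟩ := (hCmem k k).mp h
    have : k ≤ N * k := Nat.le_mul_of_pos_left k (by omega)
    omega
  have hCcard : ∀ k, (C k).card = N - 1 := by
    intro k
    rw [hC]
    rw [Finset.card_image_of_injective _ (fun a b hab => by omega)]
    exact Finset.card_range _
  set F : ℕ → Finset ℕ := fun k => if k = 0 then Finset.range N else insert 0 (C k) with hF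
  set G : ℕ → Finset ℕ := fun k => insert k (C k) with hG
  have hF0 : F 0 = Finset.range N := by simp [hF]
  have hFk : ∀ k, 1 ≤ k → F k = insert 0 (C k) := by
    intro k hk
    rw [hF]
    simp [Nat.one_le_iff_ne_zero.mp hk]
  have hGk : ∀ k, G k = insert k (C k) := fun k => by rw [hG]
  refine ⟨fun k => ∑ i ∈ F k, rankOne (u i), fun k => ∑ i ∈ G k, rankOne (u i), ?_, ?_, ?_⟩
  · have hb : ∀ i ∈ F 0, i < N * N + 1 := by
      intro i hi
      rw [hF0, Finset.mem_range] at hi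
      omega
    have hcard : (F 0).card = N := by rw [hF0, Finset.card_range]
    have := IsRankNProj_Qs u (F 0) (hloc (F 0) hb)
    rwa [hcard] at this
  · intro k hk1 hkN
    constructor
    · have hb : ∀ i ∈ F k, i < N * N + 1 := by
        intro i hi
        rw [hFk k hk1, Finset.mem_insert] at hi
        rcases hi with rfl | hi
        · omega
        · exact hCbound k hkN i hi
      have hcard : (F k).card = N := by
        rw [hFk k hk1, Finset.card_insert_of_notMem (hC0 k), hCcard,
          Nat.sub_add_cancel hN]
      have := IsRankNProj_Qs u (F k) (hloc (F k) hb)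
      rwa [hcard] at this
    · have hb : ∀ i ∈ G k, i < N * N + 1 := by
        intro i hi
        rw [hGk, Finset.mem_insert] at hi
        rcases hi with rfl | hi
        · omega
        · exact hCbound k hkN i hi
      have hcard : (G k).card = N := by
        rw [hGk, Finset.card_insert_of_notMem (hCk k hk1), hCcard,
          Nat.sub_add_cancel hN]
      have := IsRankNProj_Qs u (G k) (hloc (G k) hb)
      rwa [hcard] at this
  · show (N : ℂ) • rankOne ψ = (∑ i ∈ F 0, rankOne (u i))
      + ∑ k ∈ Finset.Icc 1 (N - 1), ((∑ i ∈ F k, rankOne (u i)) - ∑ i ∈ G k, rankOne (u i))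
    have hIcc0 : (0 : ℕ) ∉ Finset.Icc 1 (N - 1) := by simp
    have hrangeeq : Finset.range N = insert 0 (Finset.Icc 1 (N - 1)) := by
      ext i
      simp only [Finset.mem_range, Finset.mem_insert, Finset.mem_Icc]
      omega
    have hq0 : ∑ i ∈ F 0, rankOne (u i)
        = rankOne (u 0) + ∑ i ∈ Finset.Icc 1 (N - 1), rankOne (u i) := by
      rw [hF0, hrangeeq, Finset.sum_insert hIcc0]
    have hdiff : ∀ k ∈ Finset.Icc 1 (N - 1),
        (∑ i ∈ F k, rankOne (u i)) - ∑ i ∈ G k, rankOne (u i)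
          = rankOne (u 0) - rankOne (u k) := by
      intro k hk
      rw [Finset.mem_Icc] at hk
      rw [hFk k hk.1, hGk, Finset.sum_insert (hC0 k), Finset.sum_insert (hCk k hk.1)]
      abel
    rw [hq0, Finset.sum_congr rfl hdiff, Finset.sum_sub_distrib, Finset.sum_const,
      Nat.card_Icc]
    have hc : N - 1 + 1 - 1 = N - 1 := by omega
    rw [hc, hu0, Nat.cast_smul_eq_nsmul]
    conv_lhs => rw [show N = N - 1 + 1 from by omega, succ_nsmul]
    abel

end
end
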